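/- Let N > 1 and 1 ≤ s < N/2. Suppose R : ℝ^N → [0,∞) satisfies R(z) = R(|z|), is separable, symmetric (permutation-invariant), concave on the nonnegative orthant, R(0) = 0, and R(z) > 0 for all z ≠ 0. Then the ℓ1 null-space set is contained in the R null-space set: every v ∈ ℝ^N such that ‖v_S‖_1 < ‖v_{S̄}‖_1 for all S with #S ≤ s also satisfies R(v_S) < R(v_{S̄}) for all S with #S ≤ s. -/

import Mathlib

private lemma concave_mono (g : ℝ → ℝ)
    (hg0 : ∀ t : ℝ, 0 ≤ g t)
    (hconc : ∀ a b : ℝ, 0 ≤ a → 0 ≤ b → ∀ l : ℝ, 0 ≤ l → l ≤ 1 →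
      l * g a + (1 - l) * g b ≤ g (l * a + (1 - l) * b)) :
    ∀ a b : ℝ, 0 ≤ a → a ≤ b → g a ≤ g b := by
  intro a b ha hab
  by_contra hcon
  push_neg at hcon
  have hab' : a < b := lt_of_le_of_ne hab (fun h => by rw [h] at hcon; exact lt_irrefl _ hcon)
  set d : ℝ := g a - g b with hd
  have hdpos : 0 < d := by simp only [hd]; linarith
  set c : ℝ := a + (b - a) * (g a + 1) / d with hc
  by_cases hcb : c < b
  · -- then g b < -1 < 0, contradiction
    have hba : 0 < b - a := by linarith
    have h1 : (b - a) * (g a + 1) / d < b - a := by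
      have := hcb; rw [hc] at this; linarith
    rw [div_lt_iff₀ hdpos] at h1
    have h2 : g a + 1 < d := by nlinarith
    have := hg0 b
    simp only [hd] at h2
    linarith
  · push_neg at hcb  -- b ≤ c
    have hca : a < c := lt_of_lt_of_le hab' hcb
    have hcapos : 0 < c - a := by linarith
    set l : ℝ := (c - b) / (c - a) with hl
    have hl0 : 0 ≤ l := div_nonneg (by linarith) hcapos.le
    have hl1 : l ≤ 1 := by rw [hl, div_le_one hcapos]; linarith
    have hcomb : l * a + (1 - l) * c = b := by
      rw [hl]; field_simp; ring
    have hkey := hconc a c ha (by linarith) l hl0 hl1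
    rw [hcomb] at hkey
    have h2 : l * g a ≤ g b := by nlinarith [hg0 c]
    rw [hl, div_mul_eq_mul_div, div_le_iff₀ hcapos] at h2
    -- h2 : (c - b) * g a ≤ g b * (c - a)
    have he : (c - a) * d = (b - a) * (g a + 1) := by
      rw [hc]; field_simp; ring
    nlinarith [mul_le_mul_of_nonneg_right h2 hdpos.le, hg0 a, sub_pos.2 hab']

private lemma concave_slope (g : ℝ → ℝ) (hg00 : g 0 = 0)
    (hconc : ∀ a b : ℝ, 0 ≤ a → 0 ≤ b → ∀ l : ℝ, 0 ≤ l → l ≤ 1 →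
      l * g a + (1 - l) * g b ≤ g (l * a + (1 - l) * b)) :
    ∀ x t : ℝ, 0 ≤ x → x ≤ t → 0 < t → (x / t) * g t ≤ g x := by
  intro x t hx hxt ht
  have h := hconc t 0 (by linarith) le_rfl (x / t) (div_nonneg hx ht.le)
    ((div_le_one ht).2 hxt)
  rw [hg00] at h
  have hxx : (x / t) * t + (1 - x / t) * 0 = x := by field_simp; ring
  rw [hxx] at h
  linarith


/-- For a separable, symmetric, componentwise-even penalty `R`, concave on the
nonnegative orthant, with `R 0 = 0` and `R z > 0` for `z ≠ 0`: the `ℓ1`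
null-space set is contained in the `R` null-space set.  That is, every `v` with
`‖v_S‖₁ < ‖v_{S̄}‖₁` for all `S` with `#S ≤ s` also satisfies
`R (v_S) < R (v_{S̄})` for all such `S`. -/
theorem l1_NSP_subset_gNSP (N s : ℕ) (hN : 1 < N) (hs : 1 ≤ s) (hsN : 2 * s < N)
    (R : (Fin N → ℝ) → ℝ) (r : Fin N → ℝ → ℝ)
    (hRnonneg : ∀ z : Fin N → ℝ, 0 ≤ R z)
    (hrnonneg : ∀ j t, 0 ≤ r j t)
    (habs : ∀ z : Fin N → ℝ, R z = R (fun j => |z j|))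
    (hsep : ∀ z : Fin N → ℝ, R z = ∑ j, r j (z j))
    (hsymm : ∀ (π : Equiv.Perm (Fin N)) (z : Fin N → ℝ), R (z ∘ π) = R z)
    (hconc : ∀ z z' : Fin N → ℝ, (∀ j, 0 ≤ z j) → (∀ j, 0 ≤ z' j) →
      ∀ l : ℝ, 0 ≤ l → l ≤ 1 →
      l * R z + (1 - l) * R z' ≤ R (fun j => l * z j + (1 - l) * z' j))
    (hzero : R 0 = 0) (hpos : ∀ z : Fin N → ℝ, z ≠ 0 → 0 < R z)
    (v : Fin N → ℝ)
    (hv : ∀ S : Finset (Fin N), S.card ≤ s →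
      ∑ j ∈ S, |v j| < ∑ j ∈ Sᶜ, |v j|) :
    ∀ S : Finset (Fin N), S.card ≤ s →
      R (fun j => if j ∈ S then v j else 0) <
        R (fun j => if j ∈ S then 0 else v j) := by
  haveI : NeZero N := ⟨by omega⟩
  -- all the r j vanish at 0
  have hr0 : ∀ j, r j 0 = 0 := by
    have h : ∑ j, r j ((0 : Fin N → ℝ) j) = 0 := by rw [← hsep, hzero]
    simp only [Pi.zero_apply] at h
    intro j
    exact (Finset.sum_eq_zero_iff_of_nonneg (fun i _ => hrnonneg i 0)).1 h j
      (Finset.mem_univ j)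
  -- R of a single-coordinate vector
  have hRe : ∀ (k : Fin N) (t : ℝ), R (fun i => if i = k then t else 0) = r k t := by
    intro k t
    rw [hsep, Finset.sum_eq_single k]
    · simp
    · intro b _ hb; simp [hb, hr0]
    · intro h; exact absurd (Finset.mem_univ k) h
  -- all r j coincide with r 0
  have hreq : ∀ (j : Fin N) (t : ℝ), r j t = r 0 t := by
    intro j t
    by_cases hj : j = (0 : Fin N)
    · rw [hj]
    · have h2 := hsymm (Equiv.swap (0 : Fin N) j) (fun i => if i = j then t else 0)
      have h3 : ((fun i => if i = j then t else 0) ∘ (Equiv.swap (0 : Fin N) j))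
          = fun i => if i = (0 : Fin N) then t else 0 := by
        funext i
        simp only [Function.comp_apply]
        by_cases hi0 : i = 0
        · subst hi0; simp [Equiv.swap_apply_left]
        · by_cases hij : i = j
          · subst hij; simp [Equiv.swap_apply_right, hj, Ne.symm hj, hi0]
          · rw [Equiv.swap_apply_of_ne_of_ne hi0 hij]; simp [hij, hi0]
      rw [h3, hRe, hRe] at h2
      exact h2.symm
  -- separability with a single function
  have hRsum : ∀ z : Fin N → ℝ, R z = ∑ j, r 0 (z j) := by
    intro z
    rw [hsep]
    exact Finset.sum_congr rfl (fun j _ => hreq j (z j))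
  -- properties of g := r 0
  have hg00 : r 0 (0:ℝ) = 0 := hr0 0
  have hgpos : ∀ t : ℝ, 0 < t → 0 < r 0 t := by
    intro t ht
    have hz : (fun i => if i = (0 : Fin N) then t else 0) ≠ 0 := by
      intro h
      have h0 := congrFun h 0
      simp at h0
      exact ht.ne' h0
    have := hpos _ hz
    rwa [hRe] at this
  have hgconc : ∀ a b : ℝ, 0 ≤ a → 0 ≤ b → ∀ l : ℝ, 0 ≤ l → l ≤ 1 →
      l * r 0 a + (1 - l) * r 0 b ≤ r 0 (l * a + (1 - l) * b) := by
    intro a b ha hb l hl0 hl1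
    have h := hconc (fun i => if i = (0 : Fin N) then a else 0)
      (fun i => if i = (0 : Fin N) then b else 0)
      (fun j => by by_cases h : j = 0 <;> simp [h, ha, hb]) (fun j => by by_cases h : j = 0 <;> simp [h, ha, hb]) l hl0 hl1
    have hcomb : (fun j => l * (if j = (0 : Fin N) then a else 0)
        + (1 - l) * (if j = (0 : Fin N) then b else 0))
        = fun i => if i = (0 : Fin N) then l * a + (1 - l) * b else 0 := by
      funext i; split <;> ring
    rw [hRe, hRe, hcomb, hRe] at h
    exact h
  have hmono := concave_mono (r 0) (hrnonneg 0) hgconc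
  have hslope := concave_slope (r 0) hg00 hgconc
  -- rewrite the goal sums
  have hRS : ∀ S : Finset (Fin N),
      R (fun j => if j ∈ S then v j else 0) = ∑ j ∈ S, r 0 |v j| := by
    intro S
    rw [habs, hRsum]
    have : ∀ j, r 0 |if j ∈ S then v j else 0| = if j ∈ S then r 0 |v j| else 0 := by
      intro j; split <;> simp [hg00]
    calc ∑ j, r 0 |if j ∈ S then v j else 0|
        = ∑ j, (if j ∈ S then r 0 |v j| else 0) := Finset.sum_congr rfl (fun j _ => this j)
      _ = ∑ j ∈ S, r 0 |v j| := by rw [Finset.sum_ite_mem, Finset.univ_inter]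
  have hRSc : ∀ S : Finset (Fin N),
      R (fun j => if j ∈ S then 0 else v j) = ∑ j ∈ Sᶜ, r 0 |v j| := by
    intro S
    have heq : (fun j => if j ∈ S then 0 else v j)
        = fun j => if j ∈ Sᶜ then v j else 0 := by
      funext j; by_cases h : j ∈ S <;> simp [h]
    rw [heq, hRS]
  -- choose T : a card-s set maximizing the ℓ1 mass
  have hsleN : s ≤ N := by omega
  obtain ⟨T₀, hT₀sub, hT₀card⟩ := Finset.exists_subset_card_eq (s := (Finset.univ : Finset (Fin N))) (n := s)
    (by simpa using hsleN)
  obtain ⟨T, hTmem, hTmax⟩ := Finset.exists_max_image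
    (Finset.univ.powersetCard s) (fun U => ∑ j ∈ U, |v j|)
    ⟨T₀, Finset.mem_powersetCard.2 ⟨hT₀sub, hT₀card⟩⟩
  have hTcard : T.card = s := (Finset.mem_powersetCard.1 hTmem).2
  -- swap property: elements of T dominate elements outside T
  have hswap : ∀ i ∈ T, ∀ j, j ∉ T → |v j| ≤ |v i| := by
    intro i hi j hj
    by_contra hcon
    push_neg at hcon
    have hjne : j ∉ T.erase i := fun h => hj (Finset.mem_of_mem_erase h)
    have hT'card : (insert j (T.erase i)).card = s := by
      rw [Finset.card_insert_of_notMem hjne, Finset.card_erase_of_mem hi, hTcard]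
      omega
    have hle := hTmax (insert j (T.erase i))
      (Finset.mem_powersetCard.2 ⟨Finset.subset_univ _, hT'card⟩)
    have h1 : ∑ x ∈ insert j (T.erase i), |v x| = |v j| + ∑ x ∈ T.erase i, |v x| :=
      Finset.sum_insert hjne
    have h2 : |v i| + ∑ x ∈ T.erase i, |v x| = ∑ x ∈ T, |v x| :=
      Finset.add_sum_erase T (fun x => |v x|) hi
    simp only [h1] at hle
    linarith
  -- the threshold t
  have hTne : T.Nonempty := Finset.card_pos.1 (by omega)
  obtain ⟨i₀, hi₀, hmin⟩ := Finset.exists_min_image T (fun j => |v j|) hTne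
  have htpos : 0 < |v i₀| := by
    rcases (abs_nonneg (v i₀)).lt_or_eq with h | h
    · exact h
    · exfalso
      have hTc0 : ∀ j ∈ Tᶜ, |v j| = 0 := by
        intro j hj
        have := hswap i₀ hi₀ j (Finset.mem_compl.1 hj)
        have := abs_nonneg (v j)
        linarith
      have hvT := hv T (le_of_eq hTcard)
      have h1 : ∑ j ∈ Tᶜ, |v j| = 0 := Finset.sum_eq_zero hTc0
      have h2 : 0 ≤ ∑ j ∈ T, |v j| := Finset.sum_nonneg (fun j _ => abs_nonneg _)
      linarith
  set t : ℝ := |v i₀| with htdef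
  have hgt : 0 < r 0 t := hgpos t htpos
  -- key inequality for T itself
  have hTineq : ∑ j ∈ T, r 0 |v j| < ∑ j ∈ Tᶜ, r 0 |v j| := by
    have h1 : ∑ j ∈ T, r 0 |v j| ≤ (∑ j ∈ T, |v j|) * (r 0 t / t) := by
      rw [Finset.sum_mul]
      apply Finset.sum_le_sum
      intro j hj
      have hjt : t ≤ |v j| := hmin j hj
      have hjpos : 0 < |v j| := lt_of_lt_of_le htpos hjt
      have hsl := hslope t (|v j|) htpos.le hjt hjpos
      rw [div_mul_eq_mul_div, div_le_iff₀ hjpos] at hsl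
      rw [← mul_div_assoc, le_div_iff₀ htpos]
      nlinarith
    have h2 : (∑ j ∈ Tᶜ, |v j|) * (r 0 t / t) ≤ ∑ j ∈ Tᶜ, r 0 |v j| := by
      rw [Finset.sum_mul]
      apply Finset.sum_le_sum
      intro j hj
      have hjt : |v j| ≤ t := hswap i₀ hi₀ j (Finset.mem_compl.1 hj)
      have hsl := hslope (|v j|) t (abs_nonneg _) hjt htpos
      rw [div_mul_eq_mul_div] at hsl
      rw [← mul_div_assoc]
      exact hsl
    have hvT := hv T (le_of_eq hTcard)
    have hc : 0 < r 0 t / t := div_pos hgt htpos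
    calc ∑ j ∈ T, r 0 |v j| ≤ (∑ j ∈ T, |v j|) * (r 0 t / t) := h1
      _ < (∑ j ∈ Tᶜ, |v j|) * (r 0 t / t) := by
          exact mul_lt_mul_of_pos_right hvT hc
      _ ≤ ∑ j ∈ Tᶜ, r 0 |v j| := h2
  -- general S
  intro S hS
  rw [hRS, hRSc]
  have hST : ∑ j ∈ S, r 0 |v j| ≤ ∑ j ∈ T, r 0 |v j| := by
    have eS : ∑ j ∈ S ∩ T, r 0 |v j| + ∑ j ∈ S \ T, r 0 |v j| = ∑ j ∈ S, r 0 |v j| :=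
      Finset.sum_inter_add_sum_sdiff S T _
    have eT : ∑ j ∈ T ∩ S, r 0 |v j| + ∑ j ∈ T \ S, r 0 |v j| = ∑ j ∈ T, r 0 |v j| :=
      Finset.sum_inter_add_sum_sdiff T S _
    rw [Finset.inter_comm] at eT
    have hcard : (S \ T).card ≤ (T \ S).card := by
      have c1 : (S \ T).card + (S ∩ T).card = S.card := Finset.card_sdiff_add_card_inter S T
      have c2 : (T \ S).card + (T ∩ S).card = T.card := Finset.card_sdiff_add_card_inter T S
      rw [Finset.inter_comm] at c2
      omega
    have hkey : ∑ j ∈ S \ T, r 0 |v j| ≤ ∑ j ∈ T \ S, r 0 |v j| := by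
      calc ∑ j ∈ S \ T, r 0 |v j| ≤ (S \ T).card • r 0 t := by
            apply Finset.sum_le_card_nsmul
            intro j hj
            exact hmono (|v j|) t (abs_nonneg _) (hswap i₀ hi₀ j (Finset.mem_sdiff.1 hj).2)
        _ ≤ (T \ S).card • r 0 t := by
            rw [nsmul_eq_mul, nsmul_eq_mul]
            exact mul_le_mul_of_nonneg_right (by exact_mod_cast hcard) (hrnonneg 0 t)
        _ ≤ ∑ j ∈ T \ S, r 0 |v j| := by
            apply Finset.card_nsmul_le_sum
            intro j hj
            exact hmono t (|v j|) htpos.le (hmin j (Finset.mem_sdiff.1 hj).1)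
    linarith
  have e1 := Finset.sum_add_sum_compl S (fun j => r 0 |v j|)
  have e2 := Finset.sum_add_sum_compl T (fun j => r 0 |v j|)
  linarith
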